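/- arXiv:2010.15163 — 3 statements merged into one kernel-verified Lean document; each statement's English description precedes it below -/
import Mathlib

section
/- Let (cl_n, cl_∞) be a consistent system of closure operations, (Π_{m,n}, Π) a weakly consistent system of maps compatible with (cl_n), and (A_n) a Π-invariant cl-closed chain whose limit A_∞ is cl_∞-closed. If the chain stabilizes (there is r such that (Π_{m,n}(A_m))^{cl_n} = A_n for all n ≥ m ≥ r) and is eventually finitely generated (A_n = G_n^{cl_n} for some finite G_n ⊆ A_n, for all large n), then A_∞ is Π-equivariantly finitely generated: there is a finite G ⊆ A_∞ with A_∞ = (Π(G))^{cl_∞}. -/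
def IsClosureOn {α : Type*} (X : Set α) (c : Set α → Set α) : Prop :=
  (∀ A : Set α, A ⊆ X → A ⊆ c A) ∧ (∀ A : Set α, A ⊆ X → c A ⊆ X) ∧
  (∀ A : Set α, A ⊆ X → c (c A) = c A) ∧
  (∀ A B : Set α, A ⊆ B → B ⊆ X → c A ⊆ c B)

def imSet {α : Type*} (P : Set (α → α)) (A : Set α) : Set α :=
  {y | ∃ π ∈ P, ∃ v ∈ A, y = π v}

/-- Local-to-global finite generation: if a Π-invariant, cl-closed chain with
cl∞-closed limit stabilizes and is eventually finitely generated, then the limit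
is Π-equivariantly finitely generated. -/
theorem local_fg_implies_global_fg {α : Type*} (S : ℕ → Set α)
    (cl : ℕ → Set α → Set α) (clinf : Set α → Set α)
    (Pi : Set (α → α)) (P : ℕ → ℕ → Set (α → α))
    (A : ℕ → Set α)
    (hchain : ∀ m n : ℕ, m ≤ n → S m ⊆ S n)
    (hunion : (⋃ n, S n) = Set.univ)
    (hcl : ∀ n, IsClosureOn (S n) (cl n))
    (hclinf : IsClosureOn Set.univ clinf)
    (hconsCl : ∀ (n : ℕ) (B : Set α), cl n (B ∩ S n) = clinf B ∩ S n)
    (hmap : ∀ m n : ℕ, m ≤ n → ∀ π ∈ P m n, ∀ v ∈ S m, π v ∈ S n)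
    (hweak : ∀ (m : ℕ) (B : Set α), B ⊆ S m →
      imSet Pi B = ⋃ n, ⋃ (_ : m ≤ n), imSet (P m n) B)
    (hcompat : ∀ m n : ℕ, m ≤ n → ∀ B : Set α, B ⊆ S m →
      imSet (P m n) (cl m B) ⊆ cl n (imSet (P m n) B))
    (hAsub : ∀ n, A n ⊆ S n)
    (hAmono : ∀ m n : ℕ, m ≤ n → A m ⊆ A n)
    (hAclosed : ∀ n, cl n (A n) = A n)
    (hAinv : ∀ m n : ℕ, m ≤ n → cl n (imSet (P m n) (A m)) ⊆ A n)
    (hlimclosed : clinf (⋃ k, A k) = ⋃ k, A k)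
    (hstab : ∃ r : ℕ, ∀ m n : ℕ, r ≤ m → m ≤ n →
      cl n (imSet (P m n) (A m)) = A n)
    (hfg : ∃ N : ℕ, ∀ n, N ≤ n →
      ∃ G : Set α, G.Finite ∧ G ⊆ A n ∧ cl n G = A n) :
    ∃ G : Set α, G.Finite ∧ G ⊆ (⋃ k, A k) ∧
      clinf (imSet Pi G) = ⋃ k, A k := by

  obtain ⟨r, hr⟩ := hstab
  obtain ⟨N, hN⟩ := hfg
  set m := max r N with hm
  obtain ⟨G, hGfin, hGA, hGcl⟩ := hN m (le_max_right r N)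
  have hGS : G ⊆ S m := hGA.trans (hAsub m)
  refine ⟨G, hGfin, hGA.trans (Set.subset_iUnion A m), ?_⟩
  have hImS : ∀ n, m ≤ n → imSet (P m n) G ⊆ S n := by
    rintro n hn x ⟨π, hπ, v, hv, rfl⟩
    exact hmap m n hn π hπ v (hGS hv)
  have hImSA : ∀ n, m ≤ n → imSet (P m n) (A m) ⊆ S n := by
    rintro n hn x ⟨π, hπ, v, hv, rfl⟩
    exact hmap m n hn π hπ v (hAsub m hv)
  have hImsub : ∀ n, m ≤ n → imSet (P m n) G ⊆ imSet Pi G := by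
    intro n hn
    rw [hweak m G hGS]
    exact fun x hx => Set.mem_iUnion.2 ⟨n, Set.mem_iUnion.2 ⟨hn, hx⟩⟩
  have hPiGsub : imSet Pi G ⊆ ⋃ k, A k := by
    rw [hweak m G hGS]
    intro x hx
    obtain ⟨n, hx⟩ := Set.mem_iUnion.1 hx
    obtain ⟨hn, hx⟩ := Set.mem_iUnion.1 hx
    have h1 : imSet (P m n) G ⊆ imSet (P m n) (A m) := by
      rintro y ⟨π, hπ, v, hv, rfl⟩
      exact ⟨π, hπ, v, hGA hv, rfl⟩
    have h2 : imSet (P m n) (A m) ⊆ cl n (imSet (P m n) (A m)) :=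
      (hcl n).1 _ (hImSA n hn)
    have h3 : cl n (imSet (P m n) (A m)) = A n := hr m n (le_max_left r N) hn
    exact Set.mem_iUnion.2 ⟨n, h3 ▸ h2 (h1 hx)⟩
  apply Set.Subset.antisymm
  · calc clinf (imSet Pi G) ⊆ clinf (⋃ k, A k) :=
          hclinf.2.2.2 _ _ hPiGsub (Set.subset_univ _)
      _ = ⋃ k, A k := hlimclosed
  · intro x hx
    obtain ⟨n, hx⟩ := Set.mem_iUnion.1 hx
    set n' := max n m with hn'
    have hmn' : m ≤ n' := le_max_right n m
    have hxA : x ∈ A n' := hAmono n n' (le_max_left n m) hx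
    have hAn' : A n' = cl n' (imSet (P m n') (A m)) :=
      (hr m n' (le_max_left r N) hmn').symm
    have hsub1 : imSet (P m n') (A m) ⊆ cl n' (imSet (P m n') G) := by
      rw [← hGcl]
      exact hcompat m n' hmn' G hGS
    have hclSn' : cl n' (imSet (P m n') G) ⊆ S n' :=
      (hcl n').2.1 _ (hImS n' hmn')
    have hsub2 : cl n' (imSet (P m n') (A m)) ⊆ cl n' (imSet (P m n') G) := by
      calc cl n' (imSet (P m n') (A m))
          ⊆ cl n' (cl n' (imSet (P m n') G)) :=
            (hcl n').2.2.2 _ _ hsub1 hclSn'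
        _ = cl n' (imSet (P m n') G) := (hcl n').2.2.1 _ (hImS n' hmn')
    have hsub3 : imSet (P m n') G ⊆ imSet Pi G ∩ S n' :=
      fun y hy => ⟨hImsub n' hmn' hy, hImS n' hmn' hy⟩
    have hsub4 : cl n' (imSet (P m n') G) ⊆ cl n' (imSet Pi G ∩ S n') :=
      (hcl n').2.2.2 _ _ hsub3 Set.inter_subset_right
    have := hconsCl n' (imSet Pi G)
    have hxfin : x ∈ clinf (imSet Pi G) ∩ S n' := by
      rw [← this]
      exact hsub4 (hsub2 (hAn' ▸ hxA))
    exact hxfin.1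
end

section
/- Let (cl_n, cl_∞) be a consistent system of closure operations and (Π_{m,n}, Π) a consistent system of maps with Π locally finite. Let (A_n) be a Π-invariant cl-closed chain with limit A_∞. If A_∞ is Π-equivariantly finitely generated (A_∞ = (Π(G))^{cl_∞} for some finite G ⊆ A_∞), then the chain stabilizes, is eventually finitely generated, and is eventually saturated (A_∞ ∩ S_n = A_n for all large n). -/
lemma imSet_mono {α : Type*} (P : Set (α → α)) {A B : Set α} (h : A ⊆ B) :
    imSet P A ⊆ imSet P B := by
  rintro y ⟨π, hπ, v, hv, rfl⟩
  exact ⟨π, hπ, v, h hv, rfl⟩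

/-- Global-to-local finite generation: for a consistent system of closures and
a consistent, locally finite system of maps, if the limit of a Π-invariant
cl-closed chain is Π-equivariantly finitely generated, then the chain
stabilizes, is eventually finitely generated, and is eventually saturated. -/
theorem global_fg_implies_local_fg {α : Type*} (S : ℕ → Set α)
    (cl : ℕ → Set α → Set α) (clinf : Set α → Set α)
    (Pi : Set (α → α)) (P : ℕ → ℕ → Set (α → α))
    (A : ℕ → Set α)
    (hchain : ∀ m n : ℕ, m ≤ n → S m ⊆ S n)
    (hunion : (⋃ n, S n) = Set.univ)
    (hcl : ∀ n, IsClosureOn (S n) (cl n))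
    (hclinf : IsClosureOn Set.univ clinf)
    (hconsCl : ∀ (n : ℕ) (B : Set α), cl n (B ∩ S n) = clinf B ∩ S n)
    (hmap : ∀ m n : ℕ, m ≤ n → ∀ π ∈ P m n, ∀ v ∈ S m, π v ∈ S n)
    (hconsMaps : ∀ m n : ℕ, m ≤ n → ∀ B : Set α, B ⊆ S m →
      imSet (P m n) B = imSet Pi B ∩ S n)
    (hlocfin : ∀ m n : ℕ, m ≤ n → ∀ B : Set α, B ⊆ S m → B.Finite →
      (imSet (P m n) B).Finite)
    (hAsub : ∀ n, A n ⊆ S n)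
    (hAmono : ∀ m n : ℕ, m ≤ n → A m ⊆ A n)
    (hAclosed : ∀ n, cl n (A n) = A n)
    (hAinv : ∀ m n : ℕ, m ≤ n → cl n (imSet (P m n) (A m)) ⊆ A n)
    (hfg : ∃ G : Set α, G.Finite ∧ G ⊆ (⋃ k, A k) ∧
      clinf (imSet Pi G) = ⋃ k, A k) :
    (∃ r : ℕ, ∀ m n : ℕ, r ≤ m → m ≤ n →
      cl n (imSet (P m n) (A m)) = A n) ∧
    (∃ N : ℕ, ∀ n, N ≤ n →
      ∃ G : Set α, G.Finite ∧ G ⊆ A n ∧ cl n G = A n) ∧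
    (∃ N : ℕ, ∀ n, N ≤ n → (⋃ k, A k) ∩ S n = A n) := by
  classical
  obtain ⟨G, hGfin, hGsub, hGgen⟩ := hfg
  -- find r with G ⊆ A r
  obtain ⟨r, hr⟩ : ∃ r, G ⊆ A r := by
    have hidx : ∀ g ∈ G, ∃ k, g ∈ A k := fun g hg => Set.mem_iUnion.mp (hGsub hg)
    let f : α → ℕ := fun g => if h : ∃ k, g ∈ A k then h.choose else 0
    refine ⟨hGfin.toFinset.sup f, fun g hg => ?_⟩
    have hg' : ∃ k, g ∈ A k := hidx g hg
    have hgf : g ∈ A (f g) := by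
      simp only [f, dif_pos hg']
      exact hg'.choose_spec
    exact hAmono _ _ (Finset.le_sup (hGfin.mem_toFinset.mpr hg)) hgf
  -- G ⊆ S m for m ≥ r
  have hGS : ∀ m, r ≤ m → G ⊆ S m := fun m hm =>
    hr.trans ((hAsub r).trans (hchain r m hm))
  have hGA : ∀ m, r ≤ m → G ⊆ A m := fun m hm => hr.trans (hAmono r m hm)
  -- key: cl n (imSet (P m n) G) = (⋃ k, A k) ∩ S n
  have key : ∀ m n, r ≤ m → m ≤ n →
      cl n (imSet (P m n) G) = (⋃ k, A k) ∩ S n := by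
    intro m n hrm hmn
    rw [hconsMaps m n hmn G (hGS m hrm), hconsCl n (imSet Pi G), hGgen]
  have himS : ∀ m n, m ≤ n → imSet (P m n) (A m) ⊆ S n := by
    rintro m n hmn y ⟨π, hπ, v, hv, rfl⟩
    exact hmap m n hmn π hπ v (hAsub m hv)
  -- saturation
  have sat : ∀ n, r ≤ n → (⋃ k, A k) ∩ S n = A n := by
    intro n hn
    apply Set.Subset.antisymm
    · rw [← key n n hn le_rfl]
      exact ((hcl n).2.2.2 _ _ (imSet_mono _ (hGA n hn)) (himS n n le_rfl)).trans
        (hAinv n n le_rfl)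
    · exact fun x hx => ⟨Set.mem_iUnion.mpr ⟨n, hx⟩, hAsub n hx⟩
  refine ⟨⟨r, ?_⟩, ⟨r, ?_⟩, ⟨r, sat⟩⟩
  · intro m n hrm hmn
    apply Set.Subset.antisymm (hAinv m n hmn)
    rw [← sat n (hrm.trans hmn), ← key m n hrm hmn]
    exact (hcl n).2.2.2 _ _ (imSet_mono _ (hGA m hrm)) (himS m n hmn)
  · intro n hn
    refine ⟨imSet (P n n) G, hlocfin n n le_rfl G (hGS n hn) hGfin, ?_, ?_⟩
    · have h1 : imSet (P n n) G ⊆ imSet (P n n) (A n) := imSet_mono _ (hGA n hn)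
      have h2 : imSet (P n n) (A n) ⊆ cl n (imSet (P n n) (A n)) :=
        (hcl n).1 _ (himS n n le_rfl)
      exact h1.trans (h2.trans (hAinv n n le_rfl))
    · rw [key n n hn le_rfl, sat n hn]
end

section
/- For natural numbers m < n, every strictly increasing map π : ℕ → ℕ with π(m) ≤ n can be written as a composition π₂ ∘ π₁ where π₁ : ℕ → ℕ is strictly increasing with π₁(m) ≤ m+1 and π₂ : ℕ → ℕ is strictly increasing with π₂(m+1) ≤ n. That is, Inc_{m,n} = Inc_{m+1,n} ∘ Inc_{m,m+1}. -/
/-- `Inc_{m,n} = Inc_{m+1,n} ∘ Inc_{m,m+1}` for `m < n`. -/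
theorem inc_decomposition_succ (m n : ℕ) (hmn : m < n) (π : ℕ → ℕ) :
    (StrictMono π ∧ π m ≤ n) ↔
      ∃ π₁ π₂ : ℕ → ℕ, StrictMono π₁ ∧ π₁ m ≤ m + 1 ∧
        StrictMono π₂ ∧ π₂ (m + 1) ≤ n ∧ π = π₂ ∘ π₁ := by
  constructor
  · rintro ⟨hπ, hπm⟩
    by_cases h1 : π (m + 1) ≤ n
    · exact ⟨id, π, strictMono_id, by simp, hπ, h1, rfl⟩
    · push_neg at h1
      -- choose a value u ≤ n not among π 0, ..., π m
      have hu : ∃ u, u ≤ n ∧ ∀ k ≤ m, π k ≠ u := by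
        by_contra hc
        push_neg at hc
        have hsub : Finset.range (n + 1) ⊆ (Finset.range (m + 1)).image π := by
          intro u hu
          simp only [Finset.mem_range] at hu
          obtain ⟨k, hk, hku⟩ := hc u (Nat.lt_succ_iff.mp hu)
          exact Finset.mem_image.mpr ⟨k, Finset.mem_range.mpr (Nat.lt_succ_iff.mpr hk), hku⟩
        have h2 := (Finset.card_le_card hsub).trans Finset.card_image_le
        simp only [Finset.card_range] at h2
        omega
      obtain ⟨u, hun, hne⟩ := hu
      have hex : ∃ t, u < π t := ⟨m + 1, lt_of_le_of_lt hun h1⟩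
      set t := Nat.find hex with ht
      have htspec : u < π t := Nat.find_spec hex
      have htmin : ∀ k, k < t → ¬ u < π k := fun k hk => Nat.find_min hex hk
      have htm : t ≤ m + 1 := Nat.find_le (lt_of_le_of_lt hun h1)
      have hlt : ∀ k, u < π k ↔ t ≤ k := by
        intro k
        constructor
        · intro h; by_contra hc; exact htmin k (by omega) h
        · intro h; exact lt_of_lt_of_le htspec (hπ.monotone h)
      have hltu : ∀ k, k < t → π k < u := fun k hk =>
        lt_of_le_of_ne (not_lt.mp (htmin k hk)) (hne k (by omega))
      refine ⟨fun k => if u < π k then k + 1 else k,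
        fun j => if j < t then π j else if j = t then u else π (j - 1),
        ?_, ?_, ?_, ?_, ?_⟩
      · apply strictMono_nat_of_lt_succ
        intro k
        by_cases hk : u < π k
        · have hk1 : u < π (k + 1) := lt_trans hk (hπ (Nat.lt_succ_self k))
          simp [hk, hk1]
        · by_cases hk1 : u < π (k + 1) <;> simp [hk, hk1] <;> omega
      · dsimp only; split_ifs <;> omega
      · apply strictMono_nat_of_lt_succ
        intro j
        rcases lt_trichotomy (j + 1) t with h | h | h
        · have hj : j < t := by omega
          simp only [hj, if_pos, h]
          simp [hj, h]
          exact hπ (Nat.lt_succ_self j)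
        · have hj : j < t := by omega
          simp only [hj, if_pos]
          simp [hj, h, show ¬ (j + 1 < t) by omega]
          exact hltu j hj
        · have hj1 : ¬ (j + 1 < t) := by omega
          have hj1' : j + 1 ≠ t := by omega
          by_cases hj : j = t
          · simp [hj, hj1, hj1', show ¬ (t < t) by omega]
            simpa [hj] using htspec
          · have hjt : ¬ (j < t) := by omega
            simp only [hjt, if_neg, hj, hj1, hj1', if_false, not_false_iff]
            simp [hjt, hj, hj1, hj1']
            have : j - 1 < j + 1 - 1 := by omega
            exact hπ this
      · rcases Nat.lt_or_ge t (m + 1) with h | h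
        · simp [show ¬ (m + 1 < t) by omega, show m + 1 ≠ t by omega]
          simpa using hπm
        · have : t = m + 1 := by omega
          simp [this]
          exact hun
      · funext k
        by_cases hk : u < π k
        · have htk : t ≤ k := (hlt k).mp hk
          simp [Function.comp, hk, show ¬ (k + 1 < t) by omega, show k + 1 ≠ t by omega]
        · have htk : k < t := by
            by_contra hc
            exact hk ((hlt k).mpr (by omega))
          simp [Function.comp, hk, htk]
  · rintro ⟨π₁, π₂, h1, h1m, h2, h2m, rfl⟩
    exact ⟨h2.comp h1, le_trans (h2.monotone h1m) h2m⟩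
end
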